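/- The function g(t) = 1 − 1/(4 sinh²(t/4)) − 4/sinh²(t) is strictly increasing on (0,∞), with limit −∞ as t → 0⁺ and limit 1 as t → +∞; in particular there is a unique t₀ > 0 with g(t₀) = 0. -/

import Mathlib

open Filter Real

private lemma sinh_tendsto_atTop : Tendsto Real.sinh atTop atTop := by
  have h : Tendsto (fun x : ℝ => (Real.exp x - Real.exp (-x)) / 2) atTop atTop := by
    apply Tendsto.atTop_div_const (by norm_num : (0:ℝ) < 2)
    have := Real.tendsto_exp_atTop.atTop_add
      ((Real.tendsto_exp_neg_atTop_nhds_zero).neg)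
    simpa [sub_eq_add_neg] using this
  have e : Real.sinh = fun x : ℝ => (Real.exp x - Real.exp (-x)) / 2 :=
    funext fun x => Real.sinh_eq x
  rw [e]; exact h

private lemma g_strictMono : StrictMonoOn
    (fun t : ℝ => 1 - 1 / (4 * Real.sinh (t / 4) ^ 2) - 4 / Real.sinh t ^ 2)
    (Set.Ioi 0) := by
  intro a ha b hb hab
  simp only [Set.mem_Ioi] at ha hb
  have sa4 : 0 < Real.sinh (a / 4) := Real.sinh_pos_iff.2 (by linarith)
  have sb4 : 0 < Real.sinh (b / 4) := Real.sinh_pos_iff.2 (by linarith)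
  have sa : 0 < Real.sinh a := Real.sinh_pos_iff.2 ha
  have sb : 0 < Real.sinh b := Real.sinh_pos_iff.2 hb
  have h4 : Real.sinh (a / 4) < Real.sinh (b / 4) :=
    Real.sinh_lt_sinh.2 (by linarith)
  have h1 : Real.sinh a < Real.sinh b := Real.sinh_lt_sinh.2 hab
  have hsq4 : Real.sinh (a / 4) ^ 2 < Real.sinh (b / 4) ^ 2 := by
    apply pow_lt_pow_left₀ h4 sa4.le; norm_num
  have hsq : Real.sinh a ^ 2 < Real.sinh b ^ 2 := by
    apply pow_lt_pow_left₀ h1 sa.le; norm_num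
  have t1 : 1 / (4 * Real.sinh (b / 4) ^ 2) < 1 / (4 * Real.sinh (a / 4) ^ 2) := by
    apply one_div_lt_one_div_of_lt (by positivity); linarith
  have t2 : 4 / Real.sinh b ^ 2 < 4 / Real.sinh a ^ 2 := by
    apply div_lt_div_of_pos_left (by norm_num) (by positivity) hsq
  simp only
  linarith

private lemma g_tendsto_zero : Tendsto
    (fun t : ℝ => 1 - 1 / (4 * Real.sinh (t / 4) ^ 2) - 4 / Real.sinh t ^ 2)
    (nhdsWithin 0 (Set.Ioi 0)) atBot := by
  have h1 : Tendsto (fun t : ℝ => 4 * Real.sinh (t / 4) ^ 2)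
      (nhdsWithin 0 (Set.Ioi 0)) (nhdsWithin 0 (Set.Ioi 0)) := by
    apply tendsto_nhdsWithin_of_tendsto_nhds_of_eventually_within
    · have hc : Continuous (fun t : ℝ => 4 * Real.sinh (t / 4) ^ 2) := by fun_prop
      have := hc.tendsto 0
      simpa using this.mono_left nhdsWithin_le_nhds
    · filter_upwards [self_mem_nhdsWithin] with t ht
      have : 0 < Real.sinh (t / 4) := Real.sinh_pos_iff.2 (by simp at ht; linarith)
      exact Set.mem_Ioi.2 (by positivity)
  have h2 : Tendsto (fun t : ℝ => 1 / (4 * Real.sinh (t / 4) ^ 2))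
      (nhdsWithin 0 (Set.Ioi 0)) atTop := by
    simpa [Function.comp_def, one_div] using tendsto_inv_nhdsGT_zero.comp h1
  have h3 : Tendsto (fun t : ℝ => 1 - 1 / (4 * Real.sinh (t / 4) ^ 2))
      (nhdsWithin 0 (Set.Ioi 0)) atBot := by
    simpa [sub_eq_add_neg] using tendsto_atBot_add_const_left _ 1 (tendsto_neg_atBot_iff.mpr h2)
  apply tendsto_atBot_mono' _ _ h3
  filter_upwards [self_mem_nhdsWithin] with t ht
  have ht' : 0 < t := ht
  have st : 0 < Real.sinh t := Real.sinh_pos_iff.2 ht'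
  have : 0 ≤ 4 / Real.sinh t ^ 2 := by positivity
  linarith

private lemma g_tendsto_atTop : Tendsto
    (fun t : ℝ => 1 - 1 / (4 * Real.sinh (t / 4) ^ 2) - 4 / Real.sinh t ^ 2)
    atTop (nhds 1) := by
  have hdiv : Tendsto (fun t : ℝ => t / 4) atTop atTop :=
    Tendsto.atTop_div_const (by norm_num) tendsto_id
  have h1 : Tendsto (fun t : ℝ => 4 * Real.sinh (t / 4) ^ 2) atTop atTop := by
    apply Tendsto.const_mul_atTop (by norm_num : (0:ℝ) < 4)
    exact (tendsto_pow_atTop (two_ne_zero)).comp (sinh_tendsto_atTop.comp hdiv)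
  have h2 : Tendsto (fun t : ℝ => Real.sinh t ^ 2) atTop atTop :=
    (tendsto_pow_atTop (two_ne_zero)).comp sinh_tendsto_atTop
  have t1 : Tendsto (fun t : ℝ => 1 / (4 * Real.sinh (t / 4) ^ 2)) atTop (nhds 0) :=
    tendsto_const_nhds.div_atTop h1
  have t2 : Tendsto (fun t : ℝ => 4 / Real.sinh t ^ 2) atTop (nhds 0) :=
    tendsto_const_nhds.div_atTop h2
  have h3 : Tendsto (fun t : ℝ => 1 - 1 / (4 * Real.sinh (t / 4) ^ 2) - 4 / Real.sinh t ^ 2)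
      atTop (nhds (1 - 0 - 0)) := (tendsto_const_nhds.sub t1).sub t2
  simpa using h3

theorem stmt3 :
    StrictMonoOn (fun t : ℝ => 1 - 1 / (4 * Real.sinh (t / 4) ^ 2) - 4 / Real.sinh t ^ 2)
      (Set.Ioi 0) ∧
    Tendsto (fun t : ℝ => 1 - 1 / (4 * Real.sinh (t / 4) ^ 2) - 4 / Real.sinh t ^ 2)
      (nhdsWithin 0 (Set.Ioi 0)) atBot ∧
    Tendsto (fun t : ℝ => 1 - 1 / (4 * Real.sinh (t / 4) ^ 2) - 4 / Real.sinh t ^ 2)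
      atTop (nhds 1) ∧
    ∃! t₀ : ℝ, 0 < t₀ ∧
      1 - 1 / (4 * Real.sinh (t₀ / 4) ^ 2) - 4 / Real.sinh t₀ ^ 2 = 0 := by
  set g : ℝ → ℝ := fun t => 1 - 1 / (4 * Real.sinh (t / 4) ^ 2) - 4 / Real.sinh t ^ 2 with hg
  refine ⟨g_strictMono, g_tendsto_zero, g_tendsto_atTop, ?_⟩
  -- existence
  obtain ⟨a, ha0, hga⟩ : ∃ a, 0 < a ∧ g a < 0 := by
    have := (g_tendsto_zero.eventually (eventually_lt_atBot (0:ℝ))).and self_mem_nhdsWithin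
    rcases this.exists with ⟨a, h1, h2⟩
    exact ⟨a, h2, h1⟩
  obtain ⟨b, hab, hgb⟩ : ∃ b, a < b ∧ 0 < g b := by
    have h := (g_tendsto_atTop.eventually (eventually_gt_nhds (by norm_num : (0:ℝ) < 1))).and
      (eventually_gt_atTop a)
    rcases h.exists with ⟨b, h1, h2⟩
    exact ⟨b, h2, h1⟩
  have hb0 : 0 < b := lt_trans ha0 hab
  have hcont : ContinuousOn g (Set.Icc a b) := by
    apply ContinuousOn.sub
    apply ContinuousOn.sub continuousOn_const
    · apply ContinuousOn.div continuousOn_const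
      · exact (by fun_prop : Continuous (fun x : ℝ => 4 * Real.sinh (x / 4) ^ 2)).continuousOn
      · intro x hx
        have : 0 < Real.sinh (x / 4) := Real.sinh_pos_iff.2 (by
          have := hx.1; linarith)
        positivity
    · apply ContinuousOn.div continuousOn_const
      · exact (Real.continuous_sinh.pow 2).continuousOn
      · intro x hx
        have : 0 < Real.sinh x := Real.sinh_pos_iff.2 (by have := hx.1; linarith)
        positivity
  have hivt := intermediate_value_Icc hab.le hcont
  have h0mem : (0:ℝ) ∈ Set.Icc (g a) (g b) := ⟨hga.le, hgb.le⟩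
  obtain ⟨t₀, ht₀mem, ht₀⟩ := hivt h0mem
  have ht₀pos : 0 < t₀ := lt_of_lt_of_le ha0 ht₀mem.1
  refine ⟨t₀, ⟨ht₀pos, ht₀⟩, ?_⟩
  rintro s ⟨hs0, hs⟩
  exact g_strictMono.injOn (Set.mem_Ioi.2 hs0) (Set.mem_Ioi.2 ht₀pos)
    (show g s = g t₀ from by
      have hs' : g s = 0 := hs
      rw [hs', ht₀])
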